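/- arXiv:2111.13070 — 2 statements merged into one kernel-verified Lean document; each statement's English description precedes it below -/
import Mathlib

section
/- Suppose ĝ : ℂ → ℂ is of the form ĝ(z) = ∫₀^∞ e^{-zs} f(s) ds where f is continuous, supported on [t₁, ∞), and satisfies |f(s)| ≤ M e^{ωs}. Then for any ω' > ω and any t < t₁, (1/(2πi)) ∫_{ω'-i∞}^{ω'+i∞} e^{zt} ĝ(z) R(z) dz = 0 for any function R analytic and uniformly bounded in the half-plane Re(z) ≥ ω'. -/
open Complex MeasureTheory Set Filter Topology
open scoped Interval

/-- Auxiliary contour-shifting lemma: for `u > 0` and `ε > 0`, the Bromwich integral of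
`e^{-zu} R(z) (1 + ε (z - ω'))⁻²` along `Re z = ω'` vanishes, since the integrand is
analytic and decaying on the right half-plane. -/

lemma bromwich_line_zero {R : ℂ → ℂ} {ω' K u ε : ℝ}
    (hu : 0 < u) (hε : 0 < ε)
    (hR : DifferentiableOn ℂ R {z : ℂ | ω' ≤ z.re})
    (hK : ∀ z : ℂ, ω' ≤ z.re → ‖R z‖ ≤ K) :
    ∫ y : ℝ, Complex.exp (-((ω' : ℂ) + y * Complex.I) * u) * R ((ω' : ℂ) + y * Complex.I) *
      ((1 + (ε : ℂ) * (((ω' : ℂ) + y * Complex.I) - ω')) ^ 2)⁻¹ = 0 := by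
  set F : ℂ → ℂ := fun z =>
    Complex.exp (-z * u) * R z * ((1 + (ε : ℂ) * (z - ω')) ^ 2)⁻¹ with hF
  show ∫ y : ℝ, F ((ω' : ℂ) + y * Complex.I) = 0
  have hK0 : 0 ≤ K := le_trans (norm_nonneg _) (hK ω' (by simp))
  -- denominator nonzero on the half-plane
  have hne : ∀ z : ℂ, ω' ≤ z.re → (1 + (ε : ℂ) * (z - ω')) ≠ 0 := by
    intro z hz h
    have h1 : ((1 : ℂ) + (ε : ℂ) * (z - ω')).re = 1 + ε * (z.re - ω') := by simp
    rw [h] at h1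
    simp at h1
    nlinarith
  -- differentiability on the half-plane
  have hFd : DifferentiableOn ℂ F {z : ℂ | ω' ≤ z.re} := by
    apply DifferentiableOn.mul
    · apply DifferentiableOn.mul
      · exact ((differentiable_id.neg.mul_const _).cexp).differentiableOn
      · exact hR
    · apply DifferentiableOn.inv
      · exact (((differentiable_const _).add
          ((differentiable_id.sub_const _).const_mul _)).pow 2).differentiableOn
      · exact fun z hz => pow_ne_zero 2 (hne z hz)
  -- norm formula
  have hnorm : ∀ x y : ℝ, ‖F ((x : ℂ) + y * Complex.I)‖ =
      Real.exp (-(x * u)) * ‖R ((x : ℂ) + y * Complex.I)‖ *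
        ((1 + ε * (x - ω')) ^ 2 + (ε * y) ^ 2)⁻¹ := by
    intro x y
    have hw : (1 : ℂ) + (ε : ℂ) * (((x : ℂ) + y * Complex.I) - ω')
        = ((1 + ε * (x - ω') : ℝ) : ℂ) + (ε * y : ℝ) * Complex.I := by
      push_cast; ring
    have hre : (-((x : ℂ) + y * Complex.I) * u).re = -(x * u) := by simp
    rw [hF]
    simp only [norm_mul, norm_inv, norm_pow, Complex.norm_exp, hre, hw]
    rw [Complex.sq_norm, Complex.normSq_add_mul_I]
  have hmem : ∀ (x : ℝ), ω' ≤ x → ∀ (y : ℝ), ((x : ℂ) + y * Complex.I) ∈ {z : ℂ | ω' ≤ z.re} := by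
    intro x hx y; simp [hx]
  -- bound on vertical lines
  have hb1 : ∀ x y : ℝ, ω' ≤ x → ‖F ((x : ℂ) + y * Complex.I)‖ ≤
      K * Real.exp (-(x * u)) * (1 + (ε * y) ^ 2)⁻¹ := by
    intro x y hx
    rw [hnorm x y, show K * Real.exp (-(x * u)) * (1 + (ε * y) ^ 2)⁻¹
      = Real.exp (-(x * u)) * K * (1 + (ε * y) ^ 2)⁻¹ by ring]
    have hinv : ((1 + ε * (x - ω')) ^ 2 + (ε * y) ^ 2)⁻¹ ≤ (1 + (ε * y) ^ 2)⁻¹ := by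
      apply inv_anti₀ (by positivity)
      nlinarith [sq_nonneg (ε * (x - ω')), mul_nonneg hε.le (sub_nonneg.2 hx)]
    exact mul_le_mul (mul_le_mul_of_nonneg_left (hK _ (hmem x hx y)) (Real.exp_nonneg _))
      hinv (by positivity) (by positivity)
  -- bound on horizontal segments
  have hb2 : ∀ x y : ℝ, ω' ≤ x → y ≠ 0 → ‖F ((x : ℂ) + y * Complex.I)‖ ≤
      K * Real.exp (-(ω' * u)) * ((ε * y) ^ 2)⁻¹ := by
    intro x y hx hy
    rw [hnorm x y, show K * Real.exp (-(ω' * u)) * ((ε * y) ^ 2)⁻¹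
      = Real.exp (-(ω' * u)) * K * ((ε * y) ^ 2)⁻¹ by ring]
    have hεy : 0 < (ε * y) ^ 2 := by positivity
    have hinv : ((1 + ε * (x - ω')) ^ 2 + (ε * y) ^ 2)⁻¹ ≤ ((ε * y) ^ 2)⁻¹ := by
      apply inv_anti₀ hεy
      nlinarith [sq_nonneg (1 + ε * (x - ω'))]
    have hexp : Real.exp (-(x * u)) ≤ Real.exp (-(ω' * u)) := by
      apply Real.exp_le_exp.2; nlinarith
    exact mul_le_mul (mul_le_mul hexp (hK _ (hmem x hx y)) (norm_nonneg _) (Real.exp_nonneg _))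
      hinv (by positivity) (by positivity)
  -- integrable majorant
  have hg1 : Integrable (fun y : ℝ => (1 + (ε * y) ^ 2)⁻¹) :=
    integrable_inv_one_add_sq.comp_mul_left' hε.ne'
  -- continuity on vertical lines
  have hcont : ∀ x : ℝ, ω' ≤ x → Continuous (fun y : ℝ => F ((x : ℂ) + y * Complex.I)) := by
    intro x hx
    have hmap : Continuous fun y : ℝ => (x : ℂ) + y * Complex.I := by continuity
    have hRc : Continuous fun y : ℝ => R ((x : ℂ) + y * Complex.I) :=
      hR.continuousOn.comp_continuous hmap (hmem x hx)
    refine ((Continuous.mul ?_ hRc).mul (Continuous.inv₀ ?_ ?_))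
    · exact (hmap.neg.mul continuous_const).cexp
    · fun_prop
    · exact fun y => pow_ne_zero _ (hne _ (hmem x hx y))
  -- integrability on vertical lines
  have hInt : ∀ x : ℝ, ω' ≤ x → Integrable (fun y : ℝ => F ((x : ℂ) + y * Complex.I)) := by
    intro x hx
    refine Integrable.mono' (hg1.const_mul (K * Real.exp (-(x * u))))
      ((hcont x hx).aestronglyMeasurable) ?_
    filter_upwards with y
    simpa [mul_assoc] using hb1 x y hx

  -- rectangle contour identity
  have hrect : ∀ X : ℝ, ω' ≤ X → ∀ T : ℝ,
      Complex.I • (∫ y in (-T)..T, F ((ω' : ℂ) + y * Complex.I)) =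
        Complex.I • (∫ y in (-T)..T, F ((X : ℂ) + y * Complex.I)) +
        (∫ x in ω'..X, F ((x : ℂ) + ((-T : ℝ) : ℂ) * Complex.I)) -
        ∫ x in ω'..X, F ((x : ℂ) + ((T : ℝ) : ℂ) * Complex.I) := by
    intro X hX T
    have H : DifferentiableOn ℂ F
        ([[((ω' : ℂ) + ((-T : ℝ) : ℂ) * Complex.I).re,
            ((X : ℂ) + ((T : ℝ) : ℂ) * Complex.I).re]] ×ℂ
          [[((ω' : ℂ) + ((-T : ℝ) : ℂ) * Complex.I).im,
            ((X : ℂ) + ((T : ℝ) : ℂ) * Complex.I).im]]) := by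
      apply hFd.mono
      intro w hw
      have h1 := hw.1
      simp only [Complex.add_re, Complex.ofReal_re, Complex.mul_re, Complex.ofReal_im,
        Complex.I_re, Complex.I_im, mul_zero, mul_one, zero_mul, sub_zero, add_zero,
        zero_sub, neg_zero, Set.mem_preimage] at h1
      rw [Set.uIcc_of_le hX] at h1
      exact h1.1
    have key := Complex.integral_boundary_rect_eq_zero_of_differentiableOn F
      ((ω' : ℂ) + ((-T : ℝ) : ℂ) * Complex.I) ((X : ℂ) + ((T : ℝ) : ℂ) * Complex.I) H
    simp only [Complex.add_re, Complex.ofReal_re, Complex.mul_re, Complex.ofReal_im,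
      Complex.I_re, Complex.I_im, Complex.add_im, Complex.mul_im, mul_zero, mul_one,
      zero_mul, sub_zero, add_zero, zero_add, zero_sub, neg_zero] at key
    simp only [smul_eq_mul] at key ⊢
    linear_combination -key
  -- bound on the horizontal integrals
  have hhb : ∀ (c : ℝ), c ≠ 0 → ∀ X : ℝ, ω' ≤ X →
      ‖∫ x in ω'..X, F ((x : ℂ) + ((c : ℝ) : ℂ) * Complex.I)‖ ≤
        K * Real.exp (-(ω' * u)) * ((ε * c) ^ 2)⁻¹ * |X - ω'| := by
    intro c hc X hX
    apply intervalIntegral.norm_integral_le_of_norm_le_const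
    intro x hx
    rw [Set.uIoc_of_le hX] at hx
    exact hb2 x c (le_of_lt hx.1) hc
  -- shifting the contour
  have hkey : ∀ X : ℝ, ω' ≤ X →
      (∫ y : ℝ, F ((ω' : ℂ) + y * Complex.I)) = ∫ y : ℝ, F ((X : ℂ) + y * Complex.I) := by
    intro X hX
    have hVω : Tendsto (fun T : ℝ => ∫ y in (-T)..T, F ((ω' : ℂ) + y * Complex.I)) atTop
        (𝓝 (∫ y : ℝ, F ((ω' : ℂ) + y * Complex.I))) :=
      intervalIntegral_tendsto_integral (hInt ω' le_rfl) tendsto_neg_atTop_atBot tendsto_id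
    have hVX : Tendsto (fun T : ℝ => ∫ y in (-T)..T, F ((X : ℂ) + y * Complex.I)) atTop
        (𝓝 (∫ y : ℝ, F ((X : ℂ) + y * Complex.I))) :=
      intervalIntegral_tendsto_integral (hInt X hX) tendsto_neg_atTop_atBot tendsto_id
    have hzero : Tendsto (fun T : ℝ => K * Real.exp (-(ω' * u)) * ((ε * T) ^ 2)⁻¹ * |X - ω'|)
        atTop (𝓝 0) := by
      have h1 : Tendsto (fun T : ℝ => (ε * T) ^ 2) atTop atTop :=
        (tendsto_pow_atTop two_ne_zero).comp (tendsto_id.const_mul_atTop hε)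
      have := (h1.inv_tendsto_atTop.const_mul (K * Real.exp (-(ω' * u)))).mul_const |X - ω'|
      simpa using this
    have htop : Tendsto (fun T : ℝ => ∫ x in ω'..X, F ((x : ℂ) + ((T : ℝ) : ℂ) * Complex.I))
        atTop (𝓝 0) := by
      apply squeeze_zero_norm' _ hzero
      filter_upwards [eventually_gt_atTop (0 : ℝ)] with T hT using hhb T hT.ne' X hX
    have hbot : Tendsto (fun T : ℝ => ∫ x in ω'..X, F ((x : ℂ) + ((-T : ℝ) : ℂ) * Complex.I))
        atTop (𝓝 0) := by
      apply squeeze_zero_norm' _ hzero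
      filter_upwards [eventually_gt_atTop (0 : ℝ)] with T hT
      have := hhb (-T) (neg_ne_zero.2 hT.ne') X hX
      simpa [mul_neg, neg_sq] using this
    have hL : Tendsto (fun T : ℝ => Complex.I • ∫ y in (-T)..T, F ((ω' : ℂ) + y * Complex.I))
        atTop (𝓝 (Complex.I • ∫ y : ℝ, F ((ω' : ℂ) + y * Complex.I))) := hVω.const_smul _
    have hR2 : Tendsto (fun T : ℝ =>
        Complex.I • (∫ y in (-T)..T, F ((X : ℂ) + y * Complex.I)) +
          (∫ x in ω'..X, F ((x : ℂ) + ((-T : ℝ) : ℂ) * Complex.I)) -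
          ∫ x in ω'..X, F ((x : ℂ) + ((T : ℝ) : ℂ) * Complex.I)) atTop
        (𝓝 (Complex.I • (∫ y : ℝ, F ((X : ℂ) + y * Complex.I)) + 0 - 0)) :=
      ((hVX.const_smul _).add hbot).sub htop
    have hEq := tendsto_nhds_unique (hL.congr fun T => hrect X hX T) hR2
    simp only [add_zero, sub_zero, smul_eq_mul] at hEq
    exact mul_left_cancel₀ Complex.I_ne_zero hEq
  -- the common value is arbitrarily small
  have hcb : ∀ X : ℝ, ω' ≤ X → ‖∫ y : ℝ, F ((ω' : ℂ) + y * Complex.I)‖ ≤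
      K * Real.exp (-(X * u)) * ∫ y : ℝ, (1 + (ε * y) ^ 2)⁻¹ := by
    intro X hX
    rw [hkey X hX]
    calc ‖∫ y : ℝ, F ((X : ℂ) + y * Complex.I)‖
        ≤ ∫ y : ℝ, K * Real.exp (-(X * u)) * (1 + (ε * y) ^ 2)⁻¹ :=
          norm_integral_le_of_norm_le (hg1.const_mul _)
            (Eventually.of_forall fun y => hb1 X y hX)
      _ = K * Real.exp (-(X * u)) * ∫ y : ℝ, (1 + (ε * y) ^ 2)⁻¹ := by
          rw [MeasureTheory.integral_const_mul]
  have hlim : Tendsto (fun X : ℝ => K * Real.exp (-(X * u)) * ∫ y : ℝ, (1 + (ε * y) ^ 2)⁻¹)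
      atTop (𝓝 0) := by
    have h2 : Tendsto (fun X : ℝ => Real.exp (-(X * u))) atTop (𝓝 0) :=
      Real.tendsto_exp_atBot.comp (tendsto_neg_atTop_atBot.comp (tendsto_id.atTop_mul_const hu))
    have := (h2.const_mul K).mul_const (∫ y : ℝ, (1 + (ε * y) ^ 2)⁻¹)
    simpa using this
  have hn : ‖∫ y : ℝ, F ((ω' : ℂ) + y * Complex.I)‖ ≤ 0 :=
    ge_of_tendsto hlim ((eventually_ge_atTop ω').mono fun X hX => hcb X hX)
  exact norm_le_zero_iff.1 hn

/-- Causality: if `f` is supported on `[t₁, ∞)` then, for `t < t₁`, the Bromwich integral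
of `e^{zt} ĝ(z) R(z)` along the vertical line `Re z = ω'` vanishes (here
`∫_{ω'-i∞}^{ω'+i∞} F(z) dz = i ∫_ℝ F(ω' + iy) dy`). -/
theorem causality_bromwich_vanishes (f : ℝ → ℂ) (t₁ M ω ω' t : ℝ) (R : ℂ → ℂ)
    (hf : Continuous f) (hsupp : ∀ s : ℝ, s < t₁ → f s = 0)
    (hM : ∀ s : ℝ, ‖f s‖ ≤ M * Real.exp (ω * s))
    (hω : ω < ω') (ht : t < t₁)
    (hR : DifferentiableOn ℂ R {z : ℂ | ω' ≤ z.re})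
    (hRbdd : ∃ K : ℝ, ∀ z : ℂ, ω' ≤ z.re → ‖R z‖ ≤ K) :
    (1 / (2 * Real.pi * Complex.I)) *
        (Complex.I * ∫ y : ℝ,
          Complex.exp (((ω' : ℂ) + y * Complex.I) * t) *
            (∫ s in Set.Ioi (0 : ℝ),
              Complex.exp (-((ω' : ℂ) + y * Complex.I) * s) * f s) *
            R ((ω' : ℂ) + y * Complex.I))
      = 0 := by
  obtain ⟨K, hK⟩ := hRbdd
  set z : ℝ → ℂ := fun y => (ω' : ℂ) + y * Complex.I with hz
  set G : ℝ → ℂ := fun y =>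
    Complex.exp (z y * t) * (∫ s in Set.Ioi (0 : ℝ), Complex.exp (-(z y) * s) * f s) * R (z y)
    with hG
  suffices hint : (∫ y : ℝ, G y) = 0 by
    rw [hint]; simp
  -- membership of the line in the half-plane
  have hmem : ∀ y : ℝ, z y ∈ {w : ℂ | ω' ≤ w.re} := by intro y; simp [hz]
  by_cases hGint : Integrable G
  swap
  · exact integral_undef hGint
  -- the damping factor
  set d : ℝ → ℝ → ℂ := fun ε y => ((1 + (ε : ℂ) * ((y : ℂ) * Complex.I)) ^ 2)⁻¹ with hd
  have hdnorm : ∀ ε y : ℝ, ‖d ε y‖ = (1 + (ε * y) ^ 2)⁻¹ := by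
    intro ε y
    have hw : (1 : ℂ) + (ε : ℂ) * ((y : ℂ) * Complex.I)
        = ((1 : ℝ) : ℂ) + (ε * y : ℝ) * Complex.I := by push_cast; ring
    rw [hd]
    simp only [norm_inv, norm_pow, hw]
    rw [Complex.sq_norm, Complex.normSq_add_mul_I]
    norm_num
  have hd1 : ∀ ε y : ℝ, ‖d ε y‖ ≤ 1 := by
    intro ε y
    rw [hdnorm]
    rw [inv_le_one_iff₀]  -- maybe wrong name
    right; nlinarith [sq_nonneg (ε * y)]
  have hdcont : ∀ ε : ℝ, Continuous (d ε) := by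
    intro ε
    apply Continuous.inv₀
    · fun_prop
    · intro y
      apply pow_ne_zero
      intro h
      have h1 : ((1 : ℂ) + (ε : ℂ) * ((y : ℂ) * Complex.I)).re = 1 := by simp
      rw [h] at h1; simp at h1
  -- per-ε vanishing
  have hfub : ∀ ε : ℝ, 0 < ε → (∫ y : ℝ, G y * d ε y) = 0 := by
    intro ε hε
    have hω'ω : (0 : ℝ) < ω' - ω := by linarith
    set Hh : ℝ → ℝ → ℂ := fun y s =>
      Complex.exp (z y * t) * ((Complex.exp (-(z y) * s) * f s) * (R (z y) * d ε y)) with hHh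
    -- rewrite pointwise as a double integral
    have hstep : ∀ y : ℝ, G y * d ε y = ∫ s in Set.Ioi (0 : ℝ), Hh y s := by
      intro y
      rw [hG]
      rw [show Complex.exp (z y * t) * (∫ s in Set.Ioi (0 : ℝ),
            Complex.exp (-(z y) * s) * f s) * R (z y) * d ε y
          = Complex.exp (z y * t) * ((∫ s in Set.Ioi (0 : ℝ),
            Complex.exp (-(z y) * s) * f s) * (R (z y) * d ε y)) from by ring]
      rw [← MeasureTheory.integral_mul_const, ← MeasureTheory.integral_const_mul]
    -- continuity of the double integrand
    have hzc : Continuous fun p : ℝ × ℝ => z p.1 := by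
      simp only [hz]; fun_prop
    have hRc : Continuous fun p : ℝ × ℝ => R (z p.1) :=
      hR.continuousOn.comp_continuous hzc fun p => hmem p.1
    have hcontH : Continuous (Function.uncurry Hh) := by
      simp only [hHh, Function.uncurry]
      refine Continuous.mul ?_ (Continuous.mul (Continuous.mul ?_ ?_) (Continuous.mul hRc ?_))
      · exact (hzc.mul continuous_const).cexp
      · exact ((hzc.neg).mul (Complex.continuous_ofReal.comp continuous_snd)).cexp
      · exact hf.comp continuous_snd
      · exact (hdcont ε).comp continuous_fst
    -- product-integrable majorant
    have hIH : Integrable (Function.uncurry Hh) (volume.prod (volume.restrict (Set.Ioi 0))) := by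
      have hφ : Integrable (fun y : ℝ => (Real.exp (ω' * t) * K) * (1 + (ε * y) ^ 2)⁻¹) :=
        (integrable_inv_one_add_sq.comp_mul_left' hε.ne').const_mul _
      have hψ : Integrable (fun s : ℝ => M * Real.exp (-(ω' - ω) * s))
          (volume.restrict (Set.Ioi 0)) := (exp_neg_integrableOn_Ioi 0 hω'ω).const_mul M
      refine Integrable.mono' (hφ.mul_prod hψ) hcontH.aestronglyMeasurable ?_
      refine Eventually.of_forall ?_
      rintro ⟨y, s⟩
      simp only [Function.uncurry, hHh]
      have h1 : ‖Complex.exp (z y * t)‖ = Real.exp (ω' * t) := by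
        rw [Complex.norm_exp]
        congr 1
        simp [hz]
      have h2 : ‖Complex.exp (-(z y) * s)‖ = Real.exp (-(ω' * s)) := by
        rw [Complex.norm_exp]
        congr 1
        simp [hz]
      have h3 : ‖f s‖ * ‖R (z y)‖ ≤ (M * Real.exp (ω * s)) * K :=
        mul_le_mul (hM s) (hK _ (hmem y)) (norm_nonneg _)
          (le_trans (norm_nonneg _) (hM s))
      calc ‖Complex.exp (z y * t) * ((Complex.exp (-(z y) * s) * f s) * (R (z y) * d ε y))‖
          = (‖f s‖ * ‖R (z y)‖) *
              (Real.exp (ω' * t) * Real.exp (-(ω' * s)) * (1 + (ε * y) ^ 2)⁻¹) := by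
            simp only [norm_mul, h1, h2, hdnorm]; ring
        _ ≤ ((M * Real.exp (ω * s)) * K) *
              (Real.exp (ω' * t) * Real.exp (-(ω' * s)) * (1 + (ε * y) ^ 2)⁻¹) := by
            apply mul_le_mul_of_nonneg_right h3
            positivity
        _ = (Real.exp (ω' * t) * K) * (1 + (ε * y) ^ 2)⁻¹ * (M * Real.exp (-(ω' - ω) * s)) := by
            rw [show Real.exp (-(ω' - ω) * s) = Real.exp (ω * s) * Real.exp (-(ω' * s)) from by
              rw [← Real.exp_add]; ring_nf]
            ring
    -- inner integral vanishes
    have hinner : ∀ s ∈ Set.Ioi (0 : ℝ), (∫ y : ℝ, Hh y s) = 0 := by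
      intro s _
      by_cases hst : s < t₁
      · have hfs : f s = 0 := hsupp s hst
        simp [hHh, hfs]
      · push_neg at hst
        have hu : 0 < s - t := by linarith
        have hB := bromwich_line_zero (R := R) (K := K) hu hε hR hK
        have hcong : ∀ y : ℝ, Hh y s =
            (Complex.exp (-(z y) * ((s - t : ℝ) : ℂ)) * R (z y) *
              ((1 + (ε : ℂ) * (z y - ω')) ^ 2)⁻¹) * f s := by
          intro y
          have he : Complex.exp (z y * t) * Complex.exp (-(z y) * s)
              = Complex.exp (-(z y) * ((s - t : ℝ) : ℂ)) := by
            rw [← Complex.exp_add]; congr 1; push_cast; ring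
          have hzy : (z y) - (ω' : ℂ) = (y : ℂ) * Complex.I := by rw [hz]; ring
          have hdz : d ε y = ((1 + (ε : ℂ) * (z y - ω')) ^ 2)⁻¹ := by
            rw [hd, hzy]
          rw [hHh]
          simp only []
          rw [hdz, ← he]
          ring
        calc (∫ y : ℝ, Hh y s)
            = ∫ y : ℝ, (Complex.exp (-(z y) * ((s - t : ℝ) : ℂ)) * R (z y) *
                ((1 + (ε : ℂ) * (z y - ω')) ^ 2)⁻¹) * f s :=
              integral_congr_ae (Eventually.of_forall hcong)
          _ = (∫ y : ℝ, Complex.exp (-(z y) * ((s - t : ℝ) : ℂ)) * R (z y) *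
                ((1 + (ε : ℂ) * (z y - ω')) ^ 2)⁻¹) * f s := by
              rw [MeasureTheory.integral_mul_const]
          _ = 0 := by
              rw [show (∫ y : ℝ, Complex.exp (-(z y) * ((s - t : ℝ) : ℂ)) * R (z y) *
                ((1 + (ε : ℂ) * (z y - ω')) ^ 2)⁻¹) = 0 from hB]
              simp
    -- put everything together
    calc (∫ y : ℝ, G y * d ε y) = ∫ y : ℝ, ∫ s in Set.Ioi (0 : ℝ), Hh y s :=
          integral_congr_ae (Eventually.of_forall hstep)
      _ = ∫ s in Set.Ioi (0 : ℝ), ∫ y : ℝ, Hh y s := integral_integral_swap hIH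
      _ = 0 := by
          rw [MeasureTheory.setIntegral_congr_fun measurableSet_Ioi hinner]
          simp
  -- dominated convergence
  have hlim : ∀ y : ℝ, Tendsto (fun n : ℕ => G y * d ((n : ℝ) + 1)⁻¹ y) atTop (𝓝 (G y)) := by
    intro y
    have hε0 : Tendsto (fun n : ℕ => (((n : ℝ) + 1)⁻¹ : ℝ)) atTop (𝓝 0) := by
      simpa [one_div] using (tendsto_one_div_add_atTop_nhds_zero_nat : Tendsto (fun n : ℕ => 1 / ((n : ℝ) + 1)) atTop (𝓝 0))
    have h1 : Tendsto (fun n : ℕ => ((((n : ℝ) + 1)⁻¹ : ℝ) : ℂ)) atTop (𝓝 0) := by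
      have := (Complex.continuous_ofReal.tendsto 0).comp hε0
      exact this
    have h2 : Tendsto (fun n : ℕ => ((1 : ℂ) + ((((n : ℝ) + 1)⁻¹ : ℝ) : ℂ) * ((y : ℂ) * Complex.I)) ^ 2)
        atTop (𝓝 1) := by
      have := ((h1.mul_const ((y : ℂ) * Complex.I)).const_add 1).pow 2
      simpa using this
    have h3 : Tendsto (fun n : ℕ => d ((n : ℝ) + 1)⁻¹ y) atTop (𝓝 1) := by
      have := h2.inv₀ one_ne_zero
      simpa [hd] using this
    simpa using (h3.const_mul (G y))
  have hdc := MeasureTheory.tendsto_integral_of_dominated_convergence (F := fun n : ℕ => fun y => G y * d ((n : ℝ) + 1)⁻¹ y)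
    (bound := fun y => ‖G y‖)
    (fun n => (hGint.aestronglyMeasurable.mul (hdcont _).aestronglyMeasurable))
    hGint.norm
    (fun n => Eventually.of_forall fun y => by
      rw [norm_mul]
      calc ‖G y‖ * ‖d _ y‖ ≤ ‖G y‖ * 1 := by
            exact mul_le_mul_of_nonneg_left (hd1 _ y) (norm_nonneg _)
        _ = ‖G y‖ := mul_one _)
    (Eventually.of_forall hlim)
  have hzero : ∀ n : ℕ, (∫ y : ℝ, G y * d ((n : ℝ) + 1)⁻¹ y) = 0 := by
    intro n
    exact hfub _ (by positivity)
  have : Tendsto (fun n : ℕ => (0 : ℂ)) atTop (𝓝 (∫ y : ℝ, G y)) := by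
    simpa [hzero] using hdc
  exact (tendsto_nhds_unique tendsto_const_nhds this).symm
end

section
/- Let 0 < ν < 2, let z = re^{iθ} with r > 0 and π/2 < |θ| ≤ π, cos((ν-1)θ) ≠ 0, and let C, ε > 0. Suppose ẑ = z + iβ + z^{ν-1}ℓ for some β ∈ ℝ and ℓ ≥ 0 with 2|β'| ≤ C√ℓ, where β = 2β'. If |Re(ẑ)| ≤ ε, then ℓ ≤ r^{1-ν}(ε - r cos θ)/|cos((ν-1)θ)| and |Im(ẑ)| ≥ r|sin((2-ν)θ)|/|cos((ν-1)θ)| − ε|tan((ν-1)θ)| − C√(r^{1-ν}(ε - r cos θ)/|cos((ν-1)θ)|). -/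
open Complex

/-- Core inequality chain in Proposition 3.3: for `zhat = z + iβ + z^{ν-1}ℓ` with
`z = r e^{iθ}` (so `z^{ν-1} = r^{ν-1} e^{i(ν-1)θ}` on the principal branch), `ℓ ≥ 0`,
`|β| ≤ C√ℓ` and `|Re zhat| ≤ ε`, one gets the stated bounds on `ℓ` and `|Im zhat|`. -/
theorem numerical_range_core_bounds (ν r θ C ε β ℓ : ℝ)
    (hν0 : 0 < ν) (hν2 : ν < 2) (hr : 0 < r)
    (hθ1 : Real.pi / 2 < |θ|) (hθ2 : |θ| ≤ Real.pi)
    (hcos : Real.cos ((ν - 1) * θ) ≠ 0)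
    (hC : 0 < C) (hε : 0 < ε) (hℓ : 0 ≤ ℓ)
    (hβ : |β| ≤ C * Real.sqrt ℓ)
    (z zhat : ℂ)
    (hz : z = (r : ℂ) * Complex.exp (θ * Complex.I))
    (hzhat : zhat = z + Complex.I * (β : ℂ) +
      ((r ^ (ν - 1) : ℝ) : ℂ) * Complex.exp (((ν : ℂ) - 1) * θ * Complex.I) * (ℓ : ℂ))
    (hre : |zhat.re| ≤ ε) :
    ℓ ≤ r ^ (1 - ν) * (ε - r * Real.cos θ) / |Real.cos ((ν - 1) * θ)| ∧
      |zhat.im| ≥ r * |Real.sin ((2 - ν) * θ)| / |Real.cos ((ν - 1) * θ)|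
        - ε * |Real.tan ((ν - 1) * θ)|
        - C * Real.sqrt (r ^ (1 - ν) * (ε - r * Real.cos θ) / |Real.cos ((ν - 1) * θ)|) := by
  -- compute real and imaginary parts
  have h1 : ((ν : ℂ) - 1) * (θ:ℂ) * Complex.I = (((ν - 1) * θ : ℝ) : ℂ) * Complex.I := by
    push_cast; ring
  have e1 : Complex.exp ((θ:ℂ) * Complex.I) =
      ((Real.cos θ : ℝ) : ℂ) + ((Real.sin θ : ℝ) : ℂ) * Complex.I := by
    rw [Complex.exp_mul_I, Complex.ofReal_cos, Complex.ofReal_sin]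
  have e2 : Complex.exp ((((ν - 1) * θ : ℝ) : ℂ) * Complex.I) =
      ((Real.cos ((ν - 1) * θ) : ℝ) : ℂ) + ((Real.sin ((ν - 1) * θ) : ℝ) : ℂ) * Complex.I := by
    rw [Complex.exp_mul_I, Complex.ofReal_cos, Complex.ofReal_sin]
  have hRe : zhat.re = r * Real.cos θ + r ^ (ν - 1) * Real.cos ((ν - 1) * θ) * ℓ := by
    rw [hzhat, hz, h1, e1, e2]
    simp only [Complex.add_re, Complex.mul_re, Complex.mul_im, Complex.ofReal_re,
      Complex.ofReal_im, Complex.I_re, Complex.I_im]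
    ring
  have hIm : zhat.im = r * Real.sin θ + β + r ^ (ν - 1) * Real.sin ((ν - 1) * θ) * ℓ := by
    rw [hzhat, hz, h1, e1, e2]
    simp only [Complex.add_im, Complex.mul_re, Complex.mul_im, Complex.add_re, Complex.ofReal_re,
      Complex.ofReal_im, Complex.I_re, Complex.I_im]
    ring
  set c := Real.cos ((ν - 1) * θ) with hc
  set s := Real.sin ((ν - 1) * θ) with hs
  have hrp : (0:ℝ) < r ^ (ν - 1) := Real.rpow_pos_of_pos hr _
  have hrinv : r ^ (1 - ν) = (r ^ (ν - 1))⁻¹ := by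
    rw [← Real.rpow_neg hr.le]; ring_nf
  have hcosθ : Real.cos θ ≤ 0 := by
    rw [← Real.cos_abs]
    exact Real.cos_nonpos_of_pi_div_two_le_of_le hθ1.le
      (by linarith [Real.pi_pos])
  have habsc : 0 < |c| := abs_pos.mpr hcos
  -- key bound on ℓ
  have hkey : r ^ (ν - 1) * |c| * ℓ ≤ ε - r * Real.cos θ := by
    have h2 : r ^ (ν - 1) * c * ℓ = zhat.re - r * Real.cos θ := by rw [hRe]; ring
    have h3 : |r ^ (ν - 1) * c * ℓ| ≤ ε - r * Real.cos θ := by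
      rw [h2]
      have := abs_sub_abs_le_abs_sub zhat.re (r * Real.cos θ)
      have h4 : |r * Real.cos θ| = -(r * Real.cos θ) := by
        rw [abs_of_nonpos]; nlinarith
      calc |zhat.re - r * Real.cos θ| ≤ |zhat.re| + |r * Real.cos θ| := abs_sub _ _
        _ ≤ ε - r * Real.cos θ := by rw [h4]; linarith
    calc r ^ (ν - 1) * |c| * ℓ = |r ^ (ν - 1) * c * ℓ| := by
          rw [abs_mul, abs_mul, abs_of_pos hrp, _root_.abs_of_nonneg hℓ]
      _ ≤ ε - r * Real.cos θ := h3
  set B := r ^ (1 - ν) * (ε - r * Real.cos θ) / |c| with hB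
  have hℓB : ℓ ≤ B := by
    have h5 : ℓ * (r ^ (ν - 1) * |c|) ≤ ε - r * Real.cos θ := by nlinarith [hkey]
    calc ℓ = (ℓ * (r ^ (ν - 1) * |c|)) / (r ^ (ν - 1) * |c|) := by field_simp
      _ ≤ (ε - r * Real.cos θ) / (r ^ (ν - 1) * |c|) :=
          (div_le_div_iff_of_pos_right (by positivity)).mpr h5
      _ = B := by rw [hB, hrinv]; field_simp
  refine ⟨hℓB, ?_⟩
  -- imaginary part bound
  have hsub : Real.sin ((2 - ν) * θ) = Real.sin θ * c - Real.cos θ * s := by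
    rw [hc, hs, show (2 - ν) * θ = θ - (ν - 1) * θ by ring, Real.sin_sub]
  have hIm2 : zhat.im = r * Real.sin ((2 - ν) * θ) / c + β + (s / c) * zhat.re := by
    have h2 : r ^ (ν - 1) * s * ℓ = s / c * (zhat.re - r * Real.cos θ) := by
      rw [hRe]; field_simp; ring
    rw [hIm, h2, hsub]
    field_simp
    ring
  have htan : |Real.tan ((ν - 1) * θ)| = |s| / |c| := by
    rw [Real.tan_eq_sin_div_cos, abs_div]
  have hsq : Real.sqrt ℓ ≤ Real.sqrt B := Real.sqrt_le_sqrt hℓB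
  have hterm : |(s / c) * zhat.re| ≤ ε * |Real.tan ((ν - 1) * θ)| := by
    rw [abs_mul]
    calc |s / c| * |zhat.re| ≤ |s / c| * ε := mul_le_mul_of_nonneg_left hre (abs_nonneg _)
      _ = ε * (|s| / |c|) := by rw [abs_div]; ring
      _ = ε * |Real.tan ((ν - 1) * θ)| := by rw [htan]
  have hmain : |r * Real.sin ((2 - ν) * θ) / c| = r * |Real.sin ((2 - ν) * θ)| / |c| := by
    rw [abs_div, abs_mul, abs_of_pos hr]
  have htri : |zhat.im| ≥ |r * Real.sin ((2 - ν) * θ) / c| - |β| - |(s / c) * zhat.re| := by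
    rw [hIm2]
    set x := r * Real.sin ((2 - ν) * θ) / c with hx
    set y := (s / c) * zhat.re with hy
    have h7 : |x| ≤ |x + β + y| + |β| + |y| := by
      calc |x| = |(x + β + y) + (-β) + (-y)| := by ring_nf
        _ ≤ |(x + β + y) + (-β)| + |(-y)| := abs_add_le _ _
        _ ≤ |x + β + y| + |(-β)| + |(-y)| := by linarith [abs_add_le (x + β + y) (-β)]
        _ = |x + β + y| + |β| + |y| := by rw [abs_neg, abs_neg]
    linarith
  have hβ2 : |β| ≤ C * Real.sqrt B :=
    le_trans hβ (by nlinarith [Real.sqrt_nonneg ℓ])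
  rw [hmain] at htri
  linarith
end
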